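/- Let Δ be a d-dimensional random vector with E[Δ] = 0 and all fourth moments finite, and let δ ∈ ℝ^d be arbitrary. Then E[((Δ + δ)ᵀ(Δ + δ))²] − (δᵀδ)² ≥ (E[Δᵀ Δ])². -/

import Mathlib

open MeasureTheory Finset

theorem pearson_multivariate
    {Ω : Type*} [MeasurableSpace Ω] (μ : Measure Ω) [IsProbabilityMeasure μ]
    (d : ℕ) (Δ : Ω → Fin d → ℝ)
    (hL4 : ∀ i, MemLp (fun ω => Δ ω i) 4 μ)
    (hmean : ∀ i, ∫ ω, Δ ω i ∂μ = 0)
    (δ : Fin d → ℝ) :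
    (∫ ω, (∑ i, (Δ ω i + δ i) ^ 2) ^ 2 ∂μ) - (∑ i, δ i ^ 2) ^ 2 ≥
      (∫ ω, ∑ i, (Δ ω i) ^ 2 ∂μ) ^ 2 := by
  classical
  set c : ℝ := ∑ i, δ i ^ 2 with hc
  have hc0 : 0 ≤ c := Finset.sum_nonneg fun i _ => sq_nonneg _
  -- squares of L⁴ functions are in L²
  have hsq : ∀ (f : Ω → ℝ), MemLp f 4 μ → MemLp (fun ω => f ω ^ 2) 2 μ := by
    intro f hf
    have h24 : (1:ENNReal)/2 = 1/4 + 1/4 := by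
      rw [ENNReal.div_add_div_same]
      rw [show (4:ENNReal) = 2*2 from by norm_num]
      rw [ENNReal.div_eq_div_iff (by norm_num) (by norm_num) (by norm_num) (by norm_num)]
      norm_num
    haveI : ENNReal.HolderTriple 4 4 2 := ⟨by simpa only [one_div] using h24.symm⟩
    have h := hf.smul (φ := f) (r := 2) hf
    have heq : (f • f) = fun ω => f ω ^ 2 := by ext ω; simp [sq]
    rw [heq] at h
    exact h
  have hF4 : ∀ i : Fin d, MemLp (fun ω => Δ ω i + δ i) 4 μ :=
    fun i => (hL4 i).add (memLp_const _)
  have hFsq : MemLp (fun ω => ∑ i, (Δ ω i + δ i) ^ 2) 2 μ := by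
    have h := memLp_finset_sum' (f := fun (i : Fin d) ω => (Δ ω i + δ i) ^ 2)
      Finset.univ (fun i _ => hsq _ (hF4 i))
    have heq : (∑ i : Fin d, fun ω => (Δ ω i + δ i) ^ 2)
        = fun ω => ∑ i : Fin d, (Δ ω i + δ i) ^ 2 := by
      ext ω; simp
    rwa [heq] at h
  -- the centered variable X = F - c
  set X : Ω → ℝ := fun ω => (∑ i, (Δ ω i + δ i) ^ 2) - c with hXdef
  have hX2 : MemLp X 2 μ := hFsq.sub (memLp_const c)
  have hXint : Integrable X μ := hX2.integrable (by norm_num)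
  have hXsqint : Integrable (fun ω => X ω ^ 2) μ := by
    simpa [sq] using hX2.integrable_sq
  -- expand the fourth moment integral
  have hkey : (∫ ω, (∑ i, (Δ ω i + δ i) ^ 2) ^ 2 ∂μ)
      = (∫ ω, X ω ^ 2 ∂μ) + 2 * c * (∫ ω, X ω ∂μ) + c ^ 2 := by
    have hpt : ∀ ω, (∑ i, (Δ ω i + δ i) ^ 2) ^ 2
        = (X ω ^ 2 + (2 * c) * X ω) + c ^ 2 := by
      intro ω; simp only [hXdef]; ring
    have h1 : Integrable (fun ω => X ω ^ 2 + 2 * c * X ω) μ :=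
      hXsqint.add (hXint.const_mul _)
    rw [integral_congr_ae (Filter.Eventually.of_forall hpt),
      integral_add h1 (integrable_const _),
      integral_add hXsqint (hXint.const_mul _), integral_const_mul,
      integral_const]
    simp
  -- variance inequality: E[X²] ≥ (E X)²
  have hvar : (∫ ω, X ω ∂μ) ^ 2 ≤ ∫ ω, X ω ^ 2 ∂μ := by
    have h := ProbabilityTheory.variance_nonneg X μ
    rw [ProbabilityTheory.variance_eq_sub hX2] at h
    have : (∫ ω, (X ^ 2) ω ∂μ) = ∫ ω, X ω ^ 2 ∂μ := by
      simp [Pi.pow_apply]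
    simp only [this] at h
    linarith
  -- E X = E[∑ Δᵢ²]
  have hGint : Integrable (fun ω => ∑ i, (Δ ω i) ^ 2) μ := by
    refine integrable_finset_sum _ fun i _ => ?_
    simpa [sq] using (hsq _ (hL4 i)).integrable (by norm_num)
  have hTint : ∀ i : Fin d, Integrable (fun ω => 2 * δ i * Δ ω i) μ :=
    fun i => ((hL4 i).integrable (by norm_num)).const_mul _
  have hEX : (∫ ω, X ω ∂μ) = ∫ ω, ∑ i, (Δ ω i) ^ 2 ∂μ := by
    have hpt : ∀ ω, X ω = (∑ i, (Δ ω i) ^ 2) + ∑ i, 2 * δ i * Δ ω i := by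
      intro ω
      simp only [hXdef, hc, ← Finset.sum_add_distrib, ← Finset.sum_sub_distrib]
      exact Finset.sum_congr rfl fun i _ => by ring
    rw [integral_congr_ae (Filter.Eventually.of_forall hpt),
      integral_add hGint (integrable_finset_sum _ fun i _ => hTint i),
      integral_finset_sum _ fun i _ => hTint i]
    have : ∀ i : Fin d, (∫ ω, 2 * δ i * Δ ω i ∂μ) = 0 := by
      intro i
      rw [integral_const_mul, hmean i, mul_zero]
    simp [this]
  have hGnn : 0 ≤ ∫ ω, ∑ i, (Δ ω i) ^ 2 ∂μ :=
    integral_nonneg fun ω => Finset.sum_nonneg fun i _ => sq_nonneg _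
  rw [hkey, hEX]
  rw [hEX] at hvar
  nlinarith [hvar, hGnn, hc0]
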